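/- Tong's condition for existence of a Flett point: Let a < b and let f : ℝ → ℝ be continuous on [a, b] and differentiable at every point of (a, b). If the arithmetic mean (f(a) + f(b))/2 equals the integral mean (1/(b - a)) ∫_a^b f(t) dt, then there exists ξ ∈ (a, b) such that f'(ξ) = (f(ξ) - f(a)) / (ξ - a) (a Flett point of f). -/

import Mathlib

/-- Tong's condition for the existence of a Flett point. -/
theorem tong_condition (f f' : ℝ → ℝ) (a b : ℝ) (hab : a < b)
    (hfc : ContinuousOn f (Set.Icc a b))
    (hf : ∀ x ∈ Set.Ioo a b, HasDerivAt f (f' x) x)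
    (hcond : (f a + f b) / 2 = (1 / (b - a)) * ∫ t in a..b, f t) :
    ∃ ξ ∈ Set.Ioo a b, f' ξ = (f ξ - f a) / (ξ - a) := by
  set F : ℝ → ℝ := fun x => (∫ t in a..x, f t) - (x - a) * (f x + f a) / 2 with hF
  have hba : b - a ≠ 0 := sub_ne_zero.2 hab.ne'
  have hint : ∀ x ∈ Set.Icc a b, IntervalIntegrable f MeasureTheory.volume a x := by
    intro x hx
    exact (hfc.mono (Set.Icc_subset_Icc le_rfl hx.2)).intervalIntegrable_of_Icc hx.1
  have hFc : ContinuousOn F (Set.Icc a b) := by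
    apply ContinuousOn.sub
    · have h := intervalIntegral.continuousOn_primitive_interval
        (f := f) (a := a) (b := b) (μ := MeasureTheory.volume)
        (by rw [Set.uIcc_of_le hab.le]; exact hfc.integrableOn_Icc)
      rwa [Set.uIcc_of_le hab.le] at h
    · exact ((continuousOn_id.sub continuousOn_const).mul
        (hfc.add continuousOn_const)).div_const 2
  have hFab : F a = F b := by
    have hI : (∫ t in a..b, f t) = (b - a) * (f a + f b) / 2 := by
      field_simp at hcond
      linarith [hcond]
    simp only [hF, intervalIntegral.integral_same, sub_self, zero_mul, zero_div, sub_zero, hI]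
    ring
  have hFd : ∀ x ∈ Set.Ioo a b, HasDerivAt F ((f x - f a) / 2 - (x - a) * f' x / 2) x := by
    intro x hx
    have h1 : HasDerivAt (fun x => ∫ t in a..x, f t) (f x) x := by
      apply intervalIntegral.integral_hasDerivAt_right (hint x (Set.mem_Icc_of_Ioo hx))
      · exact ContinuousOn.stronglyMeasurableAtFilter isOpen_Ioo
          (fun y hy => (hf y hy).continuousAt.continuousWithinAt) x hx
      · exact (hf x hx).continuousAt
    have h2 : HasDerivAt (fun x => (x - a) * (f x + f a))
        (1 * (f x + f a) + (x - a) * f' x) x :=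
      ((hasDerivAt_id x).sub_const a).mul ((hf x hx).add_const (f a))
    have := h1.sub (h2.div_const 2)
    exact this.congr_deriv (by ring)
  obtain ⟨ξ, hξ, hξ0⟩ := exists_hasDerivAt_eq_zero hab hFc hFab hFd
  refine ⟨ξ, hξ, ?_⟩
  have hξa : ξ - a ≠ 0 := sub_ne_zero.2 hξ.1.ne'
  field_simp
  linarith [hξ0]
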